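/- If F : R² → R is analytic with F_xx ≠ 0 and F_yy ≡ F_xy²/F_xx, then every partial derivative F_{x^j y^k} with k ≥ 2 is a rational function of the derivatives {F_{x^{j'}} : j' ≤ j+k} and {F_{x^{j''} y} : j'' ≤ j+k−1}, with denominator a power of F_xx. -/

import Mathlib

open MvPolynomial



/-- Partial derivative in the first variable. -/
noncomputable def pdx (F : ℝ × ℝ → ℝ) : ℝ × ℝ → ℝ :=
  fun p => deriv (fun x => F (x, p.2)) p.1

/-- Partial derivative in the second variable. -/
noncomputable def pdy (F : ℝ × ℝ → ℝ) : ℝ × ℝ → ℝ :=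
  fun p => deriv (fun y => F (p.1, y)) p.2

lemma sliceY_hasDerivAt {f : ℝ × ℝ → ℝ} {p : ℝ × ℝ} (hf : DifferentiableAt ℝ f p) :
    HasDerivAt (fun y => f (p.1, y)) (fderiv ℝ f p (0, 1)) p.2 := by
  have h1 : HasDerivAt (fun y : ℝ => (p.1, y)) ((0 : ℝ), (1 : ℝ)) p.2 :=
    (hasDerivAt_const p.2 p.1).prodMk (hasDerivAt_id p.2)
  have := hf.hasFDerivAt.comp_hasDerivAt p.2 (by simpa using h1)
  exact this

lemma sliceX_hasDerivAt {f : ℝ × ℝ → ℝ} {p : ℝ × ℝ} (hf : DifferentiableAt ℝ f p) :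
    HasDerivAt (fun x => f (x, p.2)) (fderiv ℝ f p (1, 0)) p.1 := by
  have h1 : HasDerivAt (fun x : ℝ => (x, p.2)) ((1 : ℝ), (0 : ℝ)) p.1 :=
    (hasDerivAt_id p.1).prodMk (hasDerivAt_const p.1 p.2)
  have := hf.hasFDerivAt.comp_hasDerivAt p.1 (by simpa using h1)
  exact this

lemma pdy_eq_fderiv {f : ℝ × ℝ → ℝ} {p : ℝ × ℝ} (hf : DifferentiableAt ℝ f p) :
    pdy f p = fderiv ℝ f p (0, 1) := (sliceY_hasDerivAt hf).deriv

lemma pdx_eq_fderiv {f : ℝ × ℝ → ℝ} {p : ℝ × ℝ} (hf : DifferentiableAt ℝ f p) :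
    pdx f p = fderiv ℝ f p (1, 0) := (sliceX_hasDerivAt hf).deriv

lemma pdx_analytic {f : ℝ × ℝ → ℝ} {U : Set (ℝ × ℝ)} (hU : IsOpen U)
    (hf : AnalyticOnNhd ℝ f U) : AnalyticOnNhd ℝ (pdx f) U := by
  have h1 : AnalyticOnNhd ℝ (fun q => fderiv ℝ f q (1, 0)) U :=
    (ContinuousLinearMap.apply ℝ ℝ ((1 : ℝ), (0 : ℝ))).comp_analyticOnNhd hf.fderiv
  intro p hp
  apply (h1 p hp).congr
  filter_upwards [hU.mem_nhds hp] with q hq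
  exact (pdx_eq_fderiv ((hf q hq).differentiableAt)).symm

lemma pdy_analytic {f : ℝ × ℝ → ℝ} {U : Set (ℝ × ℝ)} (hU : IsOpen U)
    (hf : AnalyticOnNhd ℝ f U) : AnalyticOnNhd ℝ (pdy f) U := by
  have h1 : AnalyticOnNhd ℝ (fun q => fderiv ℝ f q (0, 1)) U :=
    (ContinuousLinearMap.apply ℝ ℝ ((0 : ℝ), (1 : ℝ))).comp_analyticOnNhd hf.fderiv
  intro p hp
  apply (h1 p hp).congr
  filter_upwards [hU.mem_nhds hp] with q hq
  exact (pdy_eq_fderiv ((hf q hq).differentiableAt)).symm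

lemma pdx_congr {f g : ℝ × ℝ → ℝ} {p : ℝ × ℝ} (h : f =ᶠ[nhds p] g) : pdx f p = pdx g p := by
  have hc : Filter.Tendsto (fun x : ℝ => (x, p.2)) (nhds p.1) (nhds p) := by
    have := (continuous_id.prodMk (continuous_const (y := p.2))).tendsto p.1
    simpa using this
  have h' : (fun x => f (x, p.2)) =ᶠ[nhds p.1] fun x => g (x, p.2) := hc.eventually h
  exact h'.deriv_eq

lemma pdy_congr {f g : ℝ × ℝ → ℝ} {p : ℝ × ℝ} (h : f =ᶠ[nhds p] g) : pdy f p = pdy g p := by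
  have hc : Filter.Tendsto (fun y : ℝ => (p.1, y)) (nhds p.2) (nhds p) := by
    have := ((continuous_const (y := p.1)).prodMk continuous_id).tendsto p.2
    simpa using this
  have h' : (fun y => f (p.1, y)) =ᶠ[nhds p.2] fun y => g (p.1, y) := hc.eventually h
  exact h'.deriv_eq

lemma pdx_pdy_comm {f : ℝ × ℝ → ℝ} {U : Set (ℝ × ℝ)} (hU : IsOpen U)
    (hf : AnalyticOnNhd ℝ f U) {p : ℝ × ℝ} (hp : p ∈ U) :
    pdx (pdy f) p = pdy (pdx f) p := by
  have hd1 : AnalyticOnNhd ℝ (fderiv ℝ f) U := hf.fderiv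
  have hsym : ∀ v w : ℝ × ℝ, fderiv ℝ (fderiv ℝ f) p v w = fderiv ℝ (fderiv ℝ f) p w v := by
    intro v w
    apply second_derivative_symmetric_of_eventually (f := f)
    · filter_upwards [hU.mem_nhds hp] with q hq
      exact ((hf q hq).differentiableAt).hasFDerivAt
    · exact ((hd1 p hp).differentiableAt).hasFDerivAt
  have happ : ∀ v : ℝ × ℝ, HasFDerivAt (fun q => fderiv ℝ f q v)
      ((ContinuousLinearMap.apply ℝ ℝ v).comp (fderiv ℝ (fderiv ℝ f) p)) p := fun v =>
    ((ContinuousLinearMap.apply ℝ ℝ v).hasFDerivAt).comp p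
      ((hd1 p hp).differentiableAt).hasFDerivAt
  have e1 : pdx (pdy f) p = fderiv ℝ (fderiv ℝ f) p (1, 0) (0, 1) := by
    have hev : pdy f =ᶠ[nhds p] fun q => fderiv ℝ f q (0, 1) := by
      filter_upwards [hU.mem_nhds hp] with q hq
      exact pdy_eq_fderiv ((hf q hq).differentiableAt)
    rw [pdx_congr hev, pdx_eq_fderiv (happ (0, 1)).differentiableAt, (happ (0, 1)).fderiv]
    rfl
  have e2 : pdy (pdx f) p = fderiv ℝ (fderiv ℝ f) p (0, 1) (1, 0) := by
    have hev : pdx f =ᶠ[nhds p] fun q => fderiv ℝ f q (1, 0) := by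
      filter_upwards [hU.mem_nhds hp] with q hq
      exact pdx_eq_fderiv ((hf q hq).differentiableAt)
    rw [pdy_congr hev, pdy_eq_fderiv (happ (1, 0)).differentiableAt, (happ (1, 0)).fderiv]
    rfl
  rw [e1, e2, hsym]

lemma eval_hasDerivAt {σ : Type*} [Fintype σ] [DecidableEq σ] (v : σ → ℝ → ℝ) (v' : σ → ℝ)
    (t : ℝ) (hv : ∀ i, HasDerivAt (v i) (v' i) t) (P : MvPolynomial σ ℝ) :
    HasDerivAt (fun y => MvPolynomial.eval (fun i => v i y) P)
      (∑ i, MvPolynomial.eval (fun i => v i t) (MvPolynomial.pderiv i P) * v' i) t := by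
  induction P using MvPolynomial.induction_on with
  | C a =>
      simp only [eval_C, pderiv_C, map_zero, zero_mul, Finset.sum_const_zero]
      exact hasDerivAt_const t a
  | add P Q hP hQ =>
      simp only [map_add, add_mul, Finset.sum_add_distrib]
      exact (hP.add hQ)
  | mul_X P i hP =>
      have h := hP.mul (hv i)
      simp only [map_mul, eval_X] at h ⊢
      refine HasDerivAt.congr_deriv h (Eq.symm ?_)
      have : ∀ j, eval (fun i => v i t) (pderiv j (P * X i)) * v' j =
          eval (fun i => v i t) (pderiv j P) * v' j * v i t
            + (if i = j then eval (fun i => v i t) P * v' j else 0) := by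
        intro j
        rw [pderiv_mul, pderiv_X]
        by_cases h : i = j
        · subst h; simp [Pi.single_eq_same]; ring
        · simp only [Pi.single_eq_of_ne h, h, if_false, map_zero, mul_zero, map_mul,
            eval_X, add_zero, map_add]
          ring
      rw [Finset.sum_congr rfl fun j _ => this j, Finset.sum_add_distrib, Finset.sum_ite_eq
        Finset.univ i fun j => eval (fun i => v i t) P * v' j]
      simp only [Finset.mem_univ, if_true, Finset.sum_mul]

lemma pdy_hasDerivAt {f : ℝ × ℝ → ℝ} {p : ℝ × ℝ} (hf : DifferentiableAt ℝ f p) :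
    HasDerivAt (fun y => f (p.1, y)) (pdy f p) p.2 := by
  rw [pdy_eq_fderiv hf]; exact sliceY_hasDerivAt hf

lemma pdx_hasDerivAt {f : ℝ × ℝ → ℝ} {p : ℝ × ℝ} (hf : DifferentiableAt ℝ f p) :
    HasDerivAt (fun x => f (x, p.2)) (pdx f p) p.1 := by
  rw [pdx_eq_fderiv hf]; exact sliceX_hasDerivAt hf

noncomputable def pjV (F : ℝ × ℝ → ℝ) (m : ℕ) : (Fin (m+1) ⊕ Fin m) → ℝ × ℝ → ℝ :=
  Sum.elim (fun i => pdx^[(i : ℕ)] F) (fun i => pdy (pdx^[(i : ℕ)] F))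

def Good (F : ℝ × ℝ → ℝ) (U : Set (ℝ × ℝ)) (m : ℕ) (f : ℝ × ℝ → ℝ) : Prop :=
  ∃ (P : MvPolynomial (Fin (m+1) ⊕ Fin m) ℝ) (N : ℕ), ∀ p ∈ U,
    f p = MvPolynomial.eval (fun i => pjV F m i p) P / (pdx (pdx F) p) ^ N

section GoodLemmas
variable {F : ℝ × ℝ → ℝ} {U : Set (ℝ × ℝ)} {m : ℕ}

lemma anXn (hU : IsOpen U) (hF : AnalyticOnNhd ℝ F U) (n : ℕ) :
    AnalyticOnNhd ℝ (pdx^[n] F) U := by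
  induction n with
  | zero => exact hF
  | succ n ih => rw [Function.iterate_succ_apply']; exact pdx_analytic hU ih

lemma anV (hU : IsOpen U) (hF : AnalyticOnNhd ℝ F U) (i : Fin (m+1) ⊕ Fin m) :
    AnalyticOnNhd ℝ (pjV F m i) U := by
  cases i with
  | inl i => exact anXn hU hF i
  | inr i => exact pdy_analytic hU (anXn hU hF i)

lemma good_congr {f g : ℝ × ℝ → ℝ} (h : ∀ p ∈ U, f p = g p) (hg : Good F U m g) :
    Good F U m f := by
  obtain ⟨P, N, hP⟩ := hg
  exact ⟨P, N, fun p hp => (h p hp).trans (hP p hp)⟩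

lemma good_var (i : Fin (m+1) ⊕ Fin m) : Good F U m (pjV F m i) :=
  ⟨MvPolynomial.X i, 0, fun p _ => by simp⟩

lemma good_const (r : ℝ) : Good F U m (fun _ => r) :=
  ⟨MvPolynomial.C r, 0, fun p _ => by simp⟩

lemma good_zero : Good F U m (fun _ => 0) := ⟨0, 0, fun p _ => by simp⟩

lemma good_mono {f : ℝ × ℝ → ℝ} {m' : ℕ} (hmm : m ≤ m') (hf : Good F U m f) :
    Good F U m' f := by
  obtain ⟨P, N, hP⟩ := hf
  refine ⟨MvPolynomial.rename
    (Sum.map (Fin.castLE (by omega)) (Fin.castLE hmm)) P, N, fun p hp => ?_⟩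
  rw [hP p hp, MvPolynomial.eval_rename]
  have he : ((fun i => pjV F m' i p) ∘ Sum.map (Fin.castLE (by omega : m+1 ≤ m'+1))
      (Fin.castLE hmm)) = fun i => pjV F m i p := by
    funext i; cases i <;> rfl
  rw [he]

lemma good_mul {f g : ℝ × ℝ → ℝ} (hf : Good F U m f) (hg : Good F U m g) :
    Good F U m (fun p => f p * g p) := by
  obtain ⟨P, N, hP⟩ := hf
  obtain ⟨Q, M, hQ⟩ := hg
  refine ⟨P * Q, N + M, fun p hp => ?_⟩
  show f p * g p = _
  rw [hP p hp, hQ p hp, map_mul, pow_add, div_mul_div_comm]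

lemma good_add (hxx : ∀ p ∈ U, pdx (pdx F) p ≠ 0) (hm : 2 ≤ m) {f g : ℝ × ℝ → ℝ}
    (hf : Good F U m f) (hg : Good F U m g) : Good F U m (fun p => f p + g p) := by
  obtain ⟨P, N, hP⟩ := hf
  obtain ⟨Q, M, hQ⟩ := hg
  refine ⟨P * (MvPolynomial.X (Sum.inl ⟨2, by omega⟩)) ^ M
    + Q * (MvPolynomial.X (Sum.inl ⟨2, by omega⟩)) ^ N, N + M, fun p hp => ?_⟩
  have hc : pdx (pdx F) p ≠ 0 := hxx p hp
  have hV : pjV F m (Sum.inl ⟨2, by omega⟩) p = pdx (pdx F) p := rfl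
  show f p + g p = _
  rw [hP p hp, hQ p hp]
  simp only [map_add, map_mul, map_pow, MvPolynomial.eval_X, hV]
  rw [div_add_div _ _ (pow_ne_zero N hc) (pow_ne_zero M hc), ← pow_add]
  congr 1
  ring

lemma good_neg {f : ℝ × ℝ → ℝ} (hf : Good F U m f) : Good F U m (fun p => -f p) := by
  obtain ⟨P, N, hP⟩ := hf
  exact ⟨-P, N, fun p hp => by show -f p = _; rw [hP p hp, map_neg, neg_div]⟩

lemma good_sub (hxx : ∀ p ∈ U, pdx (pdx F) p ≠ 0) (hm : 2 ≤ m) {f g : ℝ × ℝ → ℝ}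
    (hf : Good F U m f) (hg : Good F U m g) : Good F U m (fun p => f p - g p) := by
  have := good_add hxx hm hf (good_neg hg)
  exact good_congr (fun p _ => by simp [sub_eq_add_neg]) this

lemma good_sum (hxx : ∀ p ∈ U, pdx (pdx F) p ≠ 0) (hm : 2 ≤ m) {ι : Type*} (s : Finset ι)
    (g : ι → ℝ × ℝ → ℝ) (h : ∀ i ∈ s, Good F U m (g i)) :
    Good F U m (fun p => ∑ i ∈ s, g i p) := by
  classical
  induction s using Finset.induction_on with
  | empty => exact good_congr (fun p _ => by simp) good_zero
  | insert a s hni ih =>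
      have := good_add hxx hm (h a (Finset.mem_insert_self a s))
        (ih fun i hi => h i (Finset.mem_insert_of_mem hi))
      exact good_congr (fun p _ => by rw [Finset.sum_insert hni]) this

lemma good_divpow {f : ℝ × ℝ → ℝ} (K : ℕ) (hf : Good F U m f) :
    Good F U m (fun p => f p / (pdx (pdx F) p) ^ K) := by
  obtain ⟨P, N, hP⟩ := hf
  exact ⟨P, N + K, fun p hp => by show f p / _ = _; rw [hP p hp, div_div, pow_add]⟩

end GoodLemmas

lemma quot_algebra (S A c c3 : ℝ) (hc : c ≠ 0) (N : ℕ) :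
    (S * c ^ N - A * ((N : ℝ) * c ^ (N - 1) * c3)) / (c ^ N) ^ 2
      = S / c ^ N - (N : ℝ) * A * c3 / c ^ (N + 1) := by
  rcases N with _ | K
  · simp
  · have h1 : K + 1 - 1 = K := rfl
    rw [h1]
    push_cast
    field_simp
    ring

section Engine
variable {F : ℝ × ℝ → ℝ} {U : Set (ℝ × ℝ)} {m : ℕ}

lemma good_pdx (hU : IsOpen U) (hF : AnalyticOnNhd ℝ F U)
    (hxx : ∀ p ∈ U, pdx (pdx F) p ≠ 0) (hm : 2 ≤ m) {f : ℝ × ℝ → ℝ}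
    (hf : Good F U m f) : Good F U (m+1) (pdx f) := by
  classical
  obtain ⟨P, N, hP⟩ := hf
  have key : ∀ p ∈ U, pdx f p =
      (∑ i, MvPolynomial.eval (fun j => pjV F m j p) (MvPolynomial.pderiv i P)
          * pdx (pjV F m i) p) / (pdx (pdx F) p) ^ N
      - (N : ℝ) * MvPolynomial.eval (fun j => pjV F m j p) P * pdx (pdx (pdx F)) p
          / (pdx (pdx F) p) ^ (N + 1) := by
    intro p hp
    have hstep : pdx f p
        = pdx (fun q => MvPolynomial.eval (fun j => pjV F m j q) P / (pdx (pdx F) q) ^ N) p := by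
      apply pdx_congr
      filter_upwards [hU.mem_nhds hp] with q hq
      exact hP q hq
    rw [hstep]
    have hnum : HasDerivAt (fun x => MvPolynomial.eval (fun j => pjV F m j (x, p.2)) P)
        (∑ i, MvPolynomial.eval (fun j => pjV F m j p) (MvPolynomial.pderiv i P)
          * pdx (pjV F m i) p) p.1 := by
      have h := eval_hasDerivAt (fun i x => pjV F m i (x, p.2)) (fun i => pdx (pjV F m i) p) p.1
        (fun i => pdx_hasDerivAt ((anV hU hF i p hp).differentiableAt)) P
      simp only [Prod.mk.eta] at h
      exact h
    have hcd : HasDerivAt (fun x => pdx (pdx F) (x, p.2)) (pdx (pdx (pdx F)) p) p.1 :=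
      pdx_hasDerivAt (((pdx_analytic hU (pdx_analytic hU hF)) p hp).differentiableAt)
    have hdiv := hnum.div (hcd.pow N) (pow_ne_zero N (hxx p hp))
    have hd : pdx (fun q => MvPolynomial.eval (fun j => pjV F m j q) P / (pdx (pdx F) q) ^ N) p
        = _ := hdiv.deriv
    rw [hd]
    simp only [Prod.mk.eta]
    exact quot_algebra _ _ _ _ (hxx p hp) N
  apply good_congr key
  apply good_sub hxx (by omega)
  · apply good_divpow
    apply good_sum hxx (by omega)
    intro i _
    apply good_mul
    · exact good_mono (Nat.le_succ m) ⟨MvPolynomial.pderiv i P, 0, fun p _ => by simp⟩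
    · cases i with
      | inl i =>
          have he : pdx (pjV F m (Sum.inl i)) = pjV F (m+1) (Sum.inl ⟨(i : ℕ) + 1, by omega⟩) :=
            (Function.iterate_succ_apply' pdx (i : ℕ) F).symm
          rw [he]
          exact good_var _
      | inr i =>
          apply good_congr (g := pjV F (m+1) (Sum.inr ⟨(i : ℕ) + 1, by omega⟩))
          · intro p hp
            have h1 : pdx (pdy (pdx^[(i : ℕ)] F)) p = pdy (pdx (pdx^[(i : ℕ)] F)) p :=
              pdx_pdy_comm hU (anXn hU hF (i : ℕ)) hp
            have h2 : pdx (pdx^[(i : ℕ)] F) = pdx^[(i : ℕ) + 1] F :=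
              (Function.iterate_succ_apply' pdx (i : ℕ) F).symm
            calc pdx (pjV F m (Sum.inr i)) p = pdy (pdx (pdx^[(i : ℕ)] F)) p := h1
              _ = pjV F (m+1) (Sum.inr ⟨(i : ℕ) + 1, by omega⟩) p := by rw [h2]; rfl
          · exact good_var _
  · apply good_divpow
    apply good_mul
    · apply good_mul (good_const _)
      exact good_mono (Nat.le_succ m) ⟨P, 0, fun p _ => by simp⟩
    · have he : pdx (pdx (pdx F)) = pjV F (m+1) (Sum.inl ⟨3, by omega⟩) := by
        show _ = pdx^[3] F
        simp [Function.iterate_succ_apply']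
      rw [he]
      exact good_var _

end Engine

section Engine2
variable {F : ℝ × ℝ → ℝ} {U : Set (ℝ × ℝ)}

lemma good_M (hU : IsOpen U) (hF : AnalyticOnNhd ℝ F U)
    (hxx : ∀ p ∈ U, pdx (pdx F) p ≠ 0)
    (hpar : ∀ p ∈ U, pdx (pdx F) p * pdy (pdy F) p - (pdy (pdx F) p) ^ 2 = 0) (i : ℕ) :
    Good F U (i + 2) (pdy (pdy (pdx^[i] F))) := by
  induction i with
  | zero =>
      refine ⟨(MvPolynomial.X (Sum.inr ⟨1, by omega⟩)) ^ 2, 1, fun p hp => ?_⟩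
      have h := hpar p hp
      have hc := hxx p hp
      have hV : pjV F 2 (Sum.inr ⟨1, by omega⟩) p = pdy (pdx F) p := rfl
      simp only [map_pow, MvPolynomial.eval_X, hV, pow_one]
      show pdy (pdy F) p = _
      field_simp
      linarith
  | succ i ih =>
      have hg : AnalyticOnNhd ℝ (pdx^[i] F) U := anXn hU hF i
      have hstep : ∀ p ∈ U, pdy (pdy (pdx^[i+1] F)) p = pdx (pdy (pdy (pdx^[i] F))) p := by
        intro p hp
        have h2 : pdx^[i+1] F = pdx (pdx^[i] F) := Function.iterate_succ_apply' pdx i F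
        have hinner : pdy (pdy (pdx^[i+1] F)) p = pdy (pdx (pdy (pdx^[i] F))) p := by
          apply pdy_congr
          filter_upwards [hU.mem_nhds hp] with q hq
          rw [h2, ← pdx_pdy_comm hU hg hq]
        rw [hinner, pdx_pdy_comm hU (pdy_analytic hU hg) hp]
      exact good_congr hstep (good_pdx hU hF hxx (by omega) ih)

lemma good_pdy (hU : IsOpen U) (hF : AnalyticOnNhd ℝ F U)
    (hxx : ∀ p ∈ U, pdx (pdx F) p ≠ 0)
    (hpar : ∀ p ∈ U, pdx (pdx F) p * pdy (pdy F) p - (pdy (pdx F) p) ^ 2 = 0)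
    {m : ℕ} (hm : 2 ≤ m) {f : ℝ × ℝ → ℝ}
    (hf : Good F U m f) : Good F U (m+1) (pdy f) := by
  classical
  obtain ⟨P, N, hP⟩ := hf
  have key : ∀ p ∈ U, pdy f p =
      (∑ i, MvPolynomial.eval (fun j => pjV F m j p) (MvPolynomial.pderiv i P)
          * pdy (pjV F m i) p) / (pdx (pdx F) p) ^ N
      - (N : ℝ) * MvPolynomial.eval (fun j => pjV F m j p) P * pdy (pdx (pdx F)) p
          / (pdx (pdx F) p) ^ (N + 1) := by
    intro p hp
    have hstep : pdy f p
        = pdy (fun q => MvPolynomial.eval (fun j => pjV F m j q) P / (pdx (pdx F) q) ^ N) p := by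
      apply pdy_congr
      filter_upwards [hU.mem_nhds hp] with q hq
      exact hP q hq
    rw [hstep]
    have hnum : HasDerivAt (fun y => MvPolynomial.eval (fun j => pjV F m j (p.1, y)) P)
        (∑ i, MvPolynomial.eval (fun j => pjV F m j p) (MvPolynomial.pderiv i P)
          * pdy (pjV F m i) p) p.2 := by
      have h := eval_hasDerivAt (fun i y => pjV F m i (p.1, y)) (fun i => pdy (pjV F m i) p) p.2
        (fun i => pdy_hasDerivAt ((anV hU hF i p hp).differentiableAt)) P
      simp only [Prod.mk.eta] at h
      exact h
    have hcd : HasDerivAt (fun y => pdx (pdx F) (p.1, y)) (pdy (pdx (pdx F)) p) p.2 :=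
      pdy_hasDerivAt (((pdx_analytic hU (pdx_analytic hU hF)) p hp).differentiableAt)
    have hdiv := hnum.div (hcd.pow N) (pow_ne_zero N (hxx p hp))
    have hd : pdy (fun q => MvPolynomial.eval (fun j => pjV F m j q) P / (pdx (pdx F) q) ^ N) p
        = _ := hdiv.deriv
    rw [hd]
    simp only [Prod.mk.eta]
    exact quot_algebra _ _ _ _ (hxx p hp) N
  apply good_congr key
  apply good_sub hxx (by omega)
  · apply good_divpow
    apply good_sum hxx (by omega)
    intro i _
    apply good_mul
    · exact good_mono (Nat.le_succ m) ⟨MvPolynomial.pderiv i P, 0, fun p _ => by simp⟩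
    · cases i with
      | inl i =>
          have he : pdy (pjV F m (Sum.inl i)) = pjV F (m+1) (Sum.inr ⟨(i : ℕ), by omega⟩) := rfl
          rw [he]
          exact good_var _
      | inr i =>
          have := good_M hU hF hxx hpar (i : ℕ)
          exact good_mono (by omega) this
  · apply good_divpow
    apply good_mul
    · apply good_mul (good_const _)
      exact good_mono (Nat.le_succ m) ⟨P, 0, fun p _ => by simp⟩
    · have he : pdy (pdx (pdx F)) = pjV F (m+1) (Sum.inr ⟨2, by omega⟩) := rfl
      rw [he]
      exact good_var _

end Engine2

lemma good_main {F : ℝ × ℝ → ℝ} {U : Set (ℝ × ℝ)} (hU : IsOpen U)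
    (hF : AnalyticOnNhd ℝ F U) (hxx : ∀ p ∈ U, pdx (pdx F) p ≠ 0)
    (hpar : ∀ p ∈ U, pdx (pdx F) p * pdy (pdy F) p - (pdy (pdx F) p) ^ 2 = 0)
    (j k : ℕ) (hk : 2 ≤ k) : Good F U (j + k) (pdy^[k] (pdx^[j] F)) := by
  induction k, hk using Nat.le_induction with
  | base =>
      have he : pdy^[2] (pdx^[j] F) = pdy (pdy (pdx^[j] F)) := rfl
      rw [he]
      exact good_M hU hF hxx hpar j
  | succ k hk ih =>
      have he : pdy^[k+1] (pdx^[j] F) = pdy (pdy^[k] (pdx^[j] F)) :=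
        Function.iterate_succ_apply' pdy k (pdx^[j] F)
      rw [he]
      exact good_pdy hU hF hxx hpar (le_trans hk (Nat.le_add_left k j)) ih


/-- On a parabolic surface (`F_xx ≠ 0` and `F_xx·F_yy − F_xy² ≡ 0`), every
derivative `F_{x^j y^k}` with `k ≥ 2` is a polynomial in the pure derivatives
`F_{x^{j'}}` (`j' ≤ j+k`) and the mixed derivatives `F_{x^{j''} y}`
(`j'' ≤ j+k−1`), divided by a power of `F_xx`. -/
theorem parabolic_jets_rational
    (F : ℝ × ℝ → ℝ) (U : Set (ℝ × ℝ)) (hU : IsOpen U)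
    (hF : ∀ p ∈ U, AnalyticAt ℝ F p)
    (hxx : ∀ p ∈ U, pdx (pdx F) p ≠ 0)
    (hpar : ∀ p ∈ U, pdx (pdx F) p * pdy (pdy F) p - (pdy (pdx F) p) ^ 2 = 0)
    (j k : ℕ) (hk : 2 ≤ k) :
    ∃ (P : MvPolynomial (Fin (j + k + 1) ⊕ Fin (j + k)) ℝ) (N : ℕ),
      ∀ p ∈ U,
        pdy^[k] (pdx^[j] F) p
          = MvPolynomial.eval
              (Sum.elim (fun i : Fin (j + k + 1) => pdx^[(i : ℕ)] F p)
                (fun i : Fin (j + k) => pdy (pdx^[(i : ℕ)] F) p)) P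
            / (pdx (pdx F) p) ^ N := by
  obtain ⟨P, N, h⟩ := good_main hU hF hxx hpar j k hk
  refine ⟨P, N, fun p hp => ?_⟩
  rw [show (Sum.elim (fun i : Fin (j + k + 1) => pdx^[(i : ℕ)] F p)
      (fun i : Fin (j + k) => pdy (pdx^[(i : ℕ)] F) p)) = fun i => pjV F (j + k) i p from
    funext fun i => by cases i <;> rfl]
  exact h p hp
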